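/- Let m be an odd positive integer. For a nonnegative integer N, let c(N) be the number of nonnegative integers k' with mk' ≤ N and N − mk' even. Let k = mn + p with integers n ≥ 0 and 0 ≤ p ≤ m − 1. Then ∑_{N=0}^{k−1} c(N) = k²/(4m) + ((m+1)/(4m))k + p(m−p)/(4m) + (m−p)/(4m) + h(n,p), where h(n,p) = 0 if n is odd, h(n,p) = 1/4 if n is even and p is odd, and h(n,p) = −1/4 if n is even and p is even. -/

import Mathlib

open Real

private lemma count_mod_two (q r : ℕ) (hr : r < 2) :
    ((Finset.range (q+1)).filter (fun k' => k' % 2 = r)).card = (q + 2 - r) / 2 := by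
  induction q with
  | zero => interval_cases r <;> decide
  | succ q ih =>
    rw [Finset.range_add_one, Finset.filter_insert]
    by_cases h : (q+1) % 2 = r
    · rw [if_pos h, Finset.card_insert_of_notMem (by simp), ih]
      omega
    · rw [if_neg h, ih]; omega

private lemma cN_formula (m : ℕ) (hodd : Odd m) (hm : 0 < m) (N : ℕ) :
    {k' : ℕ | m * k' ≤ N ∧ Even (N - m * k')}.ncard = (N / m + 2 - N % 2) / 2 := by
  have hm2 : m % 2 = 1 := Nat.odd_iff.mp hodd
  have hset : {k' : ℕ | m * k' ≤ N ∧ Even (N - m * k')}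
      = ↑((Finset.range (N / m + 1)).filter (fun k' => k' % 2 = N % 2)) := by
    ext k'
    have hdiv : k' ≤ N / m ↔ k' * m ≤ N := Nat.le_div_iff_mul_le hm
    have hmk : (m * k') % 2 = k' % 2 := by
      rw [Nat.mul_mod, hm2, one_mul]; omega
    simp only [Set.mem_setOf_eq, Finset.coe_filter, Finset.mem_range, Nat.even_iff]
    rw [mul_comm k' m] at hdiv
    omega
  rw [hset, Set.ncard_coe_finset]
  exact count_mod_two (N / m) (N % 2) (Nat.mod_lt N (by norm_num))

private lemma main_aux (m : ℕ) (hodd : Odd m) (hm : 0 < m) (k : ℕ) :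
    ((∑ N ∈ Finset.range k, (N / m + 2 - N % 2) / 2 : ℕ) : ℝ)
      = (((k:ℝ)^2 + ((m:ℝ)+1)*(k:ℝ) + ((k % m : ℕ):ℝ)*((m:ℝ) - ((k % m : ℕ):ℝ))
          + ((m:ℝ) - ((k % m : ℕ):ℝ))) / (4*m))
        + (if Odd (k / m) then (0:ℝ) else if Odd (k % m) then 1/4 else -(1/4)) := by
  have hmR : (m:ℝ) ≠ 0 := Nat.cast_ne_zero.mpr hm.ne'
  obtain ⟨s, hs⟩ := hodd
  induction k with
  | zero =>
    simp only [Finset.range_zero, Finset.sum_empty, Nat.cast_zero, Nat.zero_mod,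
      Nat.zero_div]
    simp only [show ¬ Odd (0:ℕ) by decide, if_false]
    field_simp
    ring
  | succ k ih =>
    obtain ⟨n, hdiv⟩ : ∃ n, k / m = n := ⟨_, rfl⟩
    obtain ⟨p, hmod⟩ : ∃ p, k % m = p := ⟨_, rfl⟩
    have hpm : p < m := hmod ▸ Nat.mod_lt k hm
    have hk : k = m * n + p := by rw [← hdiv, ← hmod]; exact (Nat.div_add_mod k m).symm
    obtain ⟨t, ht⟩ : ∃ t, k = 2 * t + (n + p) := ⟨s * n, by rw [hk, hs]; ring⟩
    rw [Finset.sum_range_succ, Nat.cast_add, ih, hdiv, hmod]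
    have hkR : (k:ℝ) = m * n + p := by rw [hk]; push_cast; ring
    by_cases hpe : p + 1 = m
    · -- p = m - 1, which is even since m is odd
      have hm1 : k + 1 = m * (n + 1) := by rw [Nat.mul_add, Nat.mul_one]; omega
      have hd2 : (k+1) / m = n + 1 := by rw [hm1, Nat.mul_div_cancel_left _ hm]
      have hmo2 : (k+1) % m = 0 := by rw [hm1, Nat.mul_mod_right]
      rw [hd2, hmo2]
      have hpev : p % 2 = 0 := by omega
      have hpR : (p:ℝ) = (m:ℝ) - 1 := by
        have h : ((p:ℕ):ℝ) + 1 = ((m:ℕ):ℝ) := by exact_mod_cast congrArg (Nat.cast : ℕ → ℝ) hpe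
        linarith
      rcases Nat.even_or_odd n with hne | hno
      · obtain ⟨a, ha⟩ := hne
        have hn2 : n % 2 = 0 := by omega
        have hn12 : (n + 1) % 2 = 1 := by omega
        have hc : (n + 2 - k % 2) / 2 = a + 1 := by omega
        rw [hc]
        simp only [Nat.odd_iff, hn2, hn12, hpev]
        norm_num
        have hnR : (n:ℝ) = 2 * a := by
          have := congrArg (Nat.cast : ℕ → ℝ) ha; push_cast at this; linarith
        push_cast
        rw [hkR, hnR, hpR]
        field_simp
        ring
      · obtain ⟨a, hno⟩ := hno
        have hn2 : n % 2 = 1 := by omega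
        have hn12 : (n + 1) % 2 = 0 := by omega
        have hc : (n + 2 - k % 2) / 2 = a + 1 := by omega
        rw [hc]
        simp only [Nat.odd_iff, hn2, hn12, Nat.zero_mod]
        norm_num
        have hnR : (n:ℝ) = 2 * a + 1 := by
          have := congrArg (Nat.cast : ℕ → ℝ) hno; push_cast at this; linarith
        push_cast
        rw [hkR, hnR, hpR]
        field_simp
        ring
    · have h1 : k + 1 = m * n + (p + 1) := by omega
      have hd2 : (k+1) / m = n := by
        rw [h1, Nat.mul_add_div hm, Nat.div_eq_of_lt (by omega : p + 1 < m)]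
        omega
      have hmo2 : (k+1) % m = p + 1 := by
        rw [h1, Nat.mul_add_mod]
        exact Nat.mod_eq_of_lt (by omega)
      rw [hd2, hmo2]
      rcases Nat.even_or_odd n with hne | hno
      · obtain ⟨a, ha⟩ := hne
        have hn2 : n % 2 = 0 := by omega
        have hnR : (n:ℝ) = 2 * a := by
          have := congrArg (Nat.cast : ℕ → ℝ) ha; push_cast at this; linarith
        rcases Nat.even_or_odd p with hpe' | hpo
        · obtain ⟨b, hb⟩ := hpe'
          have hp2 : p % 2 = 0 := by omega
          have hp12 : (p + 1) % 2 = 1 := by omega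
          have hc : (n + 2 - k % 2) / 2 = a + 1 := by omega
          rw [hc]
          simp only [Nat.odd_iff, hn2, hp2, hp12]
          norm_num
          push_cast
          rw [hkR, hnR]
          field_simp
          ring
        · obtain ⟨b, hb⟩ := hpo
          have hp2 : p % 2 = 1 := by omega
          have hp12 : (p + 1) % 2 = 0 := by omega
          have hc : (n + 2 - k % 2) / 2 = a := by omega
          rw [hc]
          simp only [Nat.odd_iff, hn2, hp2, hp12]
          norm_num
          push_cast
          rw [hkR, hnR]
          field_simp
          ring
      · obtain ⟨a, hno⟩ := hno
        have hn2 : n % 2 = 1 := by omega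
        have hnR : (n:ℝ) = 2 * a + 1 := by
          have := congrArg (Nat.cast : ℕ → ℝ) hno; push_cast at this; linarith
        have hc : (n + 2 - k % 2) / 2 = a + 1 := by omega
        rw [hc]
        simp only [Nat.odd_iff, hn2]
        norm_num
        push_cast
        rw [hkR, hnR]
        field_simp
        ring

/-- Half-lune counting sum for odd `m`: with `c(N)` the number of `k'` with `mk' ≤ N` and
`N − mk'` even, and `k = mn + p`, the sum `∑_{N=0}^{k−1} c(N)` equals
`k²/(4m) + ((m+1)/(4m))k + p(m−p)/(4m) + (m−p)/(4m) + h(n,p)`. -/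
theorem half_lune_odd_m_sum (m : ℕ) (hodd : Odd m) (hm : 0 < m) (n p k : ℕ)
    (hp : p ≤ m - 1) (hk : k = m * n + p) :
    ((∑ N ∈ Finset.range k,
        ({k' : ℕ | m * k' ≤ N ∧ Even (N - m * k')}.ncard) : ℕ) : ℝ) =
      (k : ℝ) ^ 2 / (4 * m) + (((m : ℝ) + 1) / (4 * m)) * (k : ℝ)
        + (p : ℝ) * ((m : ℝ) - p) / (4 * m) + ((m : ℝ) - p) / (4 * m)
        + (if Odd n then 0 else if Odd p then 1 / 4 else -(1 / 4)) := by
  have hpm : p < m := by omega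
  have hdiv : k / m = n := by
    rw [hk, Nat.mul_add_div hm, Nat.div_eq_of_lt hpm]
    omega
  have hmod : k % m = p := by
    rw [hk, Nat.mul_add_mod]
    exact Nat.mod_eq_of_lt hpm
  rw [Finset.sum_congr rfl (fun N _ => cN_formula m hodd hm N), main_aux m hodd hm k,
    hdiv, hmod]
  ring
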